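/- If S ⊆ ℝ is a Sierpiński set, then player TWO has a winning strategy in the game G_fin^{ω+ω}(𝒪,𝒪) played on S. -/

import Mathlib

open Set Filter Topology TopologicalSpace

/-- `𝒰` is an open cover of the space `Z`. -/
def IsOpenCover {Z : Type*} [TopologicalSpace Z] (𝒰 : Set (Set Z)) : Prop :=
  (∀ U ∈ 𝒰, IsOpen U) ∧ ⋃₀ 𝒰 = univ

/-- `𝒰` is an ω-cover: an open cover, not containing the whole space,
such that every finite subset of the space is contained in a member. -/
def IsOmegaCover {Z : Type*} [TopologicalSpace Z] (𝒰 : Set (Set Z)) : Prop :=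
  IsOpenCover 𝒰 ∧ univ ∉ 𝒰 ∧ ∀ F : Set Z, F.Finite → ∃ U ∈ 𝒰, F ⊆ U

/-- The Menger property `S_fin(𝒪,𝒪)`. -/
def Menger (Z : Type*) [TopologicalSpace Z] : Prop :=
  ∀ 𝒰 : ℕ → Set (Set Z), (∀ n, IsOpenCover (𝒰 n)) →
    ∃ 𝒱 : ℕ → Set (Set Z), (∀ n, (𝒱 n).Finite ∧ 𝒱 n ⊆ 𝒰 n) ∧ ⋃₀ (⋃ n, 𝒱 n) = univ

/-- The Rothberger property `S_1(𝒪,𝒪)`. -/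
def Rothberger (Z : Type*) [TopologicalSpace Z] : Prop :=
  ∀ 𝒰 : ℕ → Set (Set Z), (∀ n, IsOpenCover (𝒰 n)) →
    ∃ U : ℕ → Set Z, (∀ n, U n ∈ 𝒰 n) ∧ (⋃ n, U n) = univ

/-- Selective screenability `S_c(𝒪,𝒪)`. -/
def SelScreenable (Z : Type*) [TopologicalSpace Z] : Prop :=
  ∀ 𝒰 : ℕ → Set (Set Z), (∀ n, IsOpenCover (𝒰 n)) →
    ∃ 𝒱 : ℕ → Set (Set Z),
      (∀ n, (𝒱 n).PairwiseDisjoint id ∧ (∀ V ∈ 𝒱 n, IsOpen V) ∧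
        (∀ V ∈ 𝒱 n, ∃ U ∈ 𝒰 n, V ⊆ U)) ∧
      ⋃₀ (⋃ n, 𝒱 n) = univ

/-- The Hurewicz property. -/
def Hurewicz (Z : Type*) [TopologicalSpace Z] : Prop :=
  ∀ 𝒰 : ℕ → Set (Set Z), (∀ n, IsOpenCover (𝒰 n)) →
    ∃ 𝒱 : ℕ → Set (Set Z), (∀ n, (𝒱 n).Finite ∧ 𝒱 n ⊆ 𝒰 n) ∧
      ∀ z : Z, ∀ᶠ n in atTop, z ∈ ⋃₀ 𝒱 n

/-- `𝒰` is a γ-cover: an infinite family of open sets such that every point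
lies in all but finitely many members. -/
def IsGammaCover {Z : Type*} [TopologicalSpace Z] (𝒰 : Set (Set Z)) : Prop :=
  𝒰.Infinite ∧ (∀ U ∈ 𝒰, IsOpen U) ∧ ∀ z : Z, {U ∈ 𝒰 | z ∉ U}.Finite

/-- `S_1(Ω,Γ)`: from every sequence of ω-covers one can pick one member each
so that the selections form a γ-cover (the γ-set property). -/
def S1OmegaGamma (Z : Type*) [TopologicalSpace Z] : Prop :=
  ∀ 𝒰 : ℕ → Set (Set Z), (∀ n, IsOmegaCover (𝒰 n)) →
    ∃ U : ℕ → Set Z, (∀ n, U n ∈ 𝒰 n) ∧ IsGammaCover (range U)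

/-- `S_1(Ω,𝒪^gp)`: from every sequence of ω-covers one can pick one member each
so that the selections form a groupable cover. -/
def S1OmegaGp (Z : Type*) [TopologicalSpace Z] : Prop :=
  ∀ 𝒰 : ℕ → Set (Set Z), (∀ n, IsOmegaCover (𝒰 n)) →
    ∃ V : ℕ → Set Z, (∀ n, V n ∈ 𝒰 n) ∧
      ∃ f : ℕ → ℕ, StrictMono f ∧
        ∀ z : Z, ∀ᶠ k in atTop, ∃ j ∈ Set.Ico (f k) (f (k + 1)), z ∈ V j

/-- TWO has a winning strategy in the length-`α` game `G_1^α(𝒪,𝒪)` on `Z`: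
a history-dependent selection rule whose picks are legal and cover `Z`
whenever ONE plays open covers. -/
def TwoWinsG1 (Z : Type*) [TopologicalSpace Z] (α : Ordinal.{0}) : Prop :=
  ∃ σ : (Ordinal.{0} → Set (Set Z)) → Ordinal.{0} → Set Z,
    (∀ O O' : Ordinal.{0} → Set (Set Z), ∀ γ, (∀ β ≤ γ, O β = O' β) → σ O γ = σ O' γ) ∧
    ∀ O : Ordinal.{0} → Set (Set Z), (∀ γ, γ < α → IsOpenCover (O γ)) →
      (∀ γ, γ < α → σ O γ ∈ O γ) ∧ ∀ z : Z, ∃ γ, γ < α ∧ z ∈ σ O γ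

/-- TWO has a winning strategy in the length-`α` game `G_fin^α(𝒪,𝒪)` on `Z`. -/
def TwoWinsGfin (Z : Type*) [TopologicalSpace Z] (α : Ordinal.{0}) : Prop :=
  ∃ σ : (Ordinal.{0} → Set (Set Z)) → Ordinal.{0} → Set (Set Z),
    (∀ O O' : Ordinal.{0} → Set (Set Z), ∀ γ, (∀ β ≤ γ, O β = O' β) → σ O γ = σ O' γ) ∧
    ∀ O : Ordinal.{0} → Set (Set Z), (∀ γ, γ < α → IsOpenCover (O γ)) →
      (∀ γ, γ < α → (σ O γ).Finite ∧ σ O γ ⊆ O γ) ∧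
      ∀ z : Z, ∃ γ, γ < α ∧ z ∈ ⋃₀ σ O γ

/-- A Lusin set: an uncountable set of reals meeting every nowhere dense set
in a countable set. -/
def IsLusin (L : Set ℝ) : Prop :=
  ¬ L.Countable ∧ ∀ N : Set ℝ, IsNowhereDense N → (L ∩ N).Countable

/-- A Sierpiński set: an uncountable set of reals meeting every Lebesgue null
set in a countable set. -/
def IsSierpinski (S : Set ℝ) : Prop :=
  ¬ S.Countable ∧ ∀ N : Set ℝ, MeasureTheory.volume N = 0 → (S ∩ N).Countable

namespace SierpProof

open MeasureTheory

noncomputable section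

/-- Key lemma: from any open cover of the subspace S, one can pick a finite
subfamily leaving a small-outer-measure leftover on the window `Icc (-n) n`. -/
lemma key (S : Set ℝ) (𝒰 : Set (Set ↥S)) (h : IsOpenCover 𝒰) (n : ℕ) :
    ∃ T : Set (Set ↥S), T.Finite ∧ T ⊆ 𝒰 ∧
      volume ((S ∩ Set.Icc (-(n:ℝ)) n) \ (Subtype.val '' ⋃₀ T)) ≤ 2⁻¹ ^ n := by
  classical
  -- extend each element of 𝒰 to an open set of ℝ
  have hext : ∀ U : ↥𝒰, ∃ V : Set ℝ, IsOpen V ∧ Subtype.val ⁻¹' V = (U : Set ↥S) := by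
    intro U
    exact isOpen_induced_iff.mp (h.1 U U.2)
  choose W hWopen hWpre using hext
  set K : Set ℝ := Set.Icc (-(n:ℝ)) n with hK
  have hSsub : S ⊆ ⋃ U : ↥𝒰, W U := by
    intro x hx
    have : (⟨x, hx⟩ : ↥S) ∈ ⋃₀ 𝒰 := h.2 ▸ mem_univ _
    obtain ⟨U, hU, hxU⟩ := this
    refine mem_iUnion.mpr ⟨⟨U, hU⟩, ?_⟩
    show (⟨x, hx⟩ : ↥S) ∈ Subtype.val ⁻¹' W ⟨U, hU⟩
    rw [hWpre]; exact hxU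
  obtain ⟨t, htc, htG⟩ := TopologicalSpace.isOpen_iUnion_countable W hWopen
  rcases t.eq_empty_or_nonempty with hte | htne
  · -- then S is empty
    refine ⟨∅, finite_empty, empty_subset _, ?_⟩
    have : S = ∅ := by
      have : (⋃ U : ↥𝒰, W U) = ∅ := by
        rw [← htG, hte]; simp
      rw [this] at hSsub
      exact eq_empty_of_subset_empty hSsub
    simp [this]
  obtain ⟨e, he⟩ := htc.exists_eq_range htne
  have heG : (⋃ k, W (e k)) = ⋃ U : ↥𝒰, W U := by
    rw [← htG, he]
    ext x; simp [mem_iUnion]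
  set E : Set ℝ := toMeasurable volume S with hE
  set A : ℕ → Set ℝ := fun m => (E ∩ K) \ ⋃ k ∈ Finset.range m, W (e k) with hA
  have hAmeas : ∀ m, MeasurableSet (A m) := by
    intro m
    exact (((measurableSet_toMeasurable _ _).inter measurableSet_Icc).diff
      (Finset.measurableSet_biUnion _ (fun k _ => (hWopen (e k)).measurableSet)))
  have hAanti : Antitone A := by
    intro a b hab
    apply diff_subset_diff_right
    intro x hx
    simp only [Finset.mem_range, mem_iUnion] at hx ⊢
    obtain ⟨k, hk, hxk⟩ := hx
    exact ⟨k, lt_of_lt_of_le hk hab, hxk⟩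
  have hAfin : volume (A 0) ≠ ⊤ := by
    apply ne_of_lt
    calc volume (A 0) ≤ volume K := measure_mono (fun x hx => hx.1.2)
    _ < ⊤ := measure_Icc_lt_top
  have hAinter : (⋂ m, A m) = (E ∩ K) \ ⋃ k, W (e k) := by
    ext x
    constructor
    · intro hx
      have h0 := mem_iInter.mp hx 0
      refine ⟨h0.1, ?_⟩
      intro hxU
      obtain ⟨k, hxk⟩ := mem_iUnion.mp hxU
      exact (mem_iInter.mp hx (k+1)).2
        (mem_iUnion₂.mpr ⟨k, Finset.mem_range.mpr k.lt_succ_self, hxk⟩)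
    · rintro ⟨hx1, hx2⟩
      refine mem_iInter.mpr fun m => ⟨hx1, fun hc => hx2 ?_⟩
      obtain ⟨k, _, hxk⟩ := mem_iUnion₂.mp hc
      exact mem_iUnion.mpr ⟨k, hxk⟩
  have hinter0 : volume ((⋂ m, A m)) = 0 := by
    rw [hAinter]
    have h1 : (E ∩ K) \ ⋃ k, W (e k) = E ∩ (K \ ⋃ k, W (e k)) := by
      ext x; simp only [mem_diff, mem_inter_iff]; tauto
    rw [h1, hE]
    rw [MeasureTheory.Measure.measure_toMeasurable_inter_of_sFinite
      (measurableSet_Icc.diff (isOpen_iUnion (fun k => hWopen (e k))).measurableSet) S]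
    have : S ∩ (K \ ⋃ k, W (e k)) = ∅ := by
      apply eq_empty_of_forall_notMem
      rintro x ⟨hxS, -, hxn⟩
      exact hxn (heG ▸ hSsub hxS)
    rw [this, measure_empty]
  have htend : Tendsto (volume ∘ A) atTop (nhds 0) := by
    have := MeasureTheory.tendsto_measure_iInter_atTop
      (fun m => (hAmeas m).nullMeasurableSet) hAanti ⟨0, hAfin⟩
    rwa [hinter0] at this
  have hpos : (0:ENNReal) < 2⁻¹ ^ n :=
    ENNReal.pow_pos (ENNReal.inv_pos.mpr (by norm_num)) n
  obtain ⟨m, hm⟩ := (htend.eventually (Iio_mem_nhds hpos)).exists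
  refine ⟨(fun k => ((e k : ↥𝒰) : Set ↥S)) '' (Set.Iio m), (Set.finite_Iio m).image _,
    ?_, ?_⟩
  · rintro U ⟨k, -, rfl⟩
    exact (e k).2
  · refine le_of_lt (lt_of_le_of_lt (measure_mono ?_) hm)
    rintro x ⟨⟨hxS, hxK⟩, hxn⟩
    refine ⟨⟨subset_toMeasurable _ _ hxS, hxK⟩, ?_⟩
    intro hxn2
    simp only [mem_iUnion, Finset.mem_range] at hxn2
    obtain ⟨k, hk, hxk⟩ := hxn2
    apply hxn
    have : (⟨x, hxS⟩ : ↥S) ∈ ((e k : ↥𝒰) : Set ↥S) := by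
      rw [← hWpre (e k)]; exact hxk
    exact ⟨⟨x, hxS⟩, ⟨_, ⟨k, hk, rfl⟩, this⟩, rfl⟩

end

end SierpProof

namespace SierpProof

open MeasureTheory

noncomputable section

open Classical in
def phase1 (S : Set ℝ) (𝒰 : Set (Set ↥S)) (n : ℕ) : Set (Set ↥S) :=
  if h : IsOpenCover 𝒰 then (key S 𝒰 h n).choose else ∅

lemma phase1_spec {S : Set ℝ} {𝒰 : Set (Set ↥S)} (h : IsOpenCover 𝒰) (n : ℕ) :
    (phase1 S 𝒰 n).Finite ∧ phase1 S 𝒰 n ⊆ 𝒰 ∧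
      volume ((S ∩ Set.Icc (-(n:ℝ)) n) \ (Subtype.val '' ⋃₀ phase1 S 𝒰 n)) ≤ 2⁻¹ ^ n := by
  rw [phase1, dif_pos h]
  exact (key S 𝒰 h n).choose_spec

open Classical in
def pick (S : Set ℝ) (𝒰 : Set (Set ↥S)) (z : ↥S) : Set (Set ↥S) :=
  if h : ∃ U ∈ 𝒰, z ∈ U then {h.choose} else ∅

lemma pick_finite (S : Set ℝ) (𝒰 : Set (Set ↥S)) (z : ↥S) : (pick S 𝒰 z).Finite := by
  rw [pick]; split_ifs
  exacts [finite_singleton _, finite_empty]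

lemma pick_subset (S : Set ℝ) (𝒰 : Set (Set ↥S)) (z : ↥S) : pick S 𝒰 z ⊆ 𝒰 := by
  rw [pick]; split_ifs with h
  · simpa only [singleton_subset_iff] using h.choose_spec.1
  · exact empty_subset _

def resid (S : Set ℝ) (O : ℕ → Set (Set ↥S)) : Set ↥S :=
  {z | ∀ n : ℕ, z ∉ ⋃₀ phase1 S (O n) n}

open Classical in
def enum (S : Set ℝ) (R : Set ↥S) (k : ℕ) : Set ↥S :=
  if h : ∃ f : ℕ → ↥S, R ⊆ Set.range f then {h.choose k} else ∅

lemma enum_finite (S : Set ℝ) (R : Set ↥S) (k : ℕ) : (enum S R k).Finite := by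
  rw [enum]; split_ifs
  exacts [finite_singleton _, finite_empty]

open Classical in
def natOf (γ : Ordinal.{0}) : ℕ :=
  if h : γ < Ordinal.omega0 then (Ordinal.lt_omega0.mp h).choose else 0

lemma natOf_natCast (n : ℕ) : natOf (n : Ordinal.{0}) = n := by
  rw [natOf, dif_pos (Ordinal.nat_lt_omega0 n)]
  exact (Nat.cast_inj.mp (Ordinal.lt_omega0.mp (Ordinal.nat_lt_omega0 n)).choose_spec).symm

open Classical in
def strat (S : Set ℝ) (O : Ordinal.{0} → Set (Set ↥S)) (γ : Ordinal.{0}) : Set (Set ↥S) :=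
  if _ : γ < Ordinal.omega0 then phase1 S (O γ) (natOf γ)
  else ⋃ z ∈ enum S (resid S (fun n : ℕ => O n)) (natOf (γ - Ordinal.omega0)), pick S (O γ) z

lemma resid_countable (S : Set ℝ) (hS : IsSierpinski S) (O : ℕ → Set (Set ↥S))
    (hO : ∀ n, IsOpenCover (O n)) : (resid S O).Countable := by
  set R : Set ℝ := Subtype.val '' (resid S O) with hR
  have hRsub : R ⊆ S := by rintro x ⟨z, -, rfl⟩; exact z.2
  have hRn : ∀ k n : ℕ, k ≤ n → R ∩ Set.Icc (-(k:ℝ)) k ⊆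
      (S ∩ Set.Icc (-(n:ℝ)) n) \ (Subtype.val '' ⋃₀ phase1 S (O n) n) := by
    rintro k n hkn x ⟨⟨z, hzres, rfl⟩, hxK⟩
    refine ⟨⟨z.2, Set.Icc_subset_Icc (by exact_mod_cast neg_le_neg (Nat.cast_le.mpr hkn))
      (by exact_mod_cast Nat.cast_le.mpr hkn) hxK⟩, ?_⟩
    rintro ⟨w, hw, hwx⟩
    have : w = z := Subtype.val_injective hwx
    exact hzres n (this ▸ hw)
  have hRk0 : ∀ k : ℕ, volume (R ∩ Set.Icc (-(k:ℝ)) k) = 0 := by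
    intro k
    by_contra hne
    obtain ⟨n0, hn0⟩ := ENNReal.exists_inv_two_pow_lt hne
    set n := max k n0 with hn
    have hle : volume (R ∩ Set.Icc (-(k:ℝ)) k) ≤ 2⁻¹ ^ n :=
      le_trans (measure_mono (hRn k n (le_max_left _ _))) (phase1_spec (hO n) n).2.2
    have hmono : (2⁻¹ : ENNReal) ^ n ≤ 2⁻¹ ^ n0 :=
      pow_le_pow_of_le_one zero_le (by norm_num) (le_max_right _ _)
    exact absurd (lt_of_le_of_lt (hle.trans hmono) hn0) (lt_irrefl _)
  have hR0 : volume R = 0 := by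
    have hcover : R ⊆ ⋃ k : ℕ, R ∩ Set.Icc (-(k:ℝ)) k := by
      intro x hx
      obtain ⟨k, hk⟩ := exists_nat_ge |x|
      exact mem_iUnion.mpr ⟨k, hx, (abs_le.mp hk).1, (abs_le.mp hk).2⟩
    refine le_antisymm ?_ zero_le
    calc volume R ≤ ∑' k : ℕ, volume (R ∩ Set.Icc (-(k:ℝ)) k) :=
          le_trans (measure_mono hcover) (measure_iUnion_le _)
    _ = 0 := by simp [hRk0]
  have hSR := hS.2 R hR0
  have hRc : R.Countable := by
    rwa [inter_eq_self_of_subset_right hRsub] at hSR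
  exact Set.Countable.mono (fun z hz => mem_preimage.mpr (mem_image_of_mem _ hz))
    (hRc.preimage Subtype.val_injective)

end

end SierpProof


/-- If `S` is a Sierpiński set then TWO has a winning strategy in
`G_fin^{ω+ω}(𝒪,𝒪)` played on `S`. -/
theorem sierpinski_twoWinsGfin_omega_add_omega
    (S : Set ℝ) (hS : IsSierpinski S) :
    TwoWinsGfin ↥S (Ordinal.omega0 + Ordinal.omega0) := by
  classical
  refine ⟨SierpProof.strat S, ?_, ?_⟩
  · intro O O' γ hagree
    unfold SierpProof.strat
    split_ifs with hγ
    · rw [hagree γ le_rfl]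
    · have hω : Ordinal.omega0 ≤ γ := not_lt.mp hγ
      have h1 : (fun n : ℕ => O n) = fun n : ℕ => O' n :=
        funext fun n => hagree _ (le_of_lt (lt_of_lt_of_le (Ordinal.nat_lt_omega0 n) hω))
      rw [hagree γ le_rfl, h1]
  · intro O hO
    constructor
    · intro γ hγ
      by_cases hlt : γ < Ordinal.omega0
      · rw [SierpProof.strat, dif_pos hlt]
        have := SierpProof.phase1_spec (hO γ hγ) (SierpProof.natOf γ)
        exact ⟨this.1, this.2.1⟩
      · rw [SierpProof.strat, dif_neg hlt]
        constructor
        · exact Set.Finite.biUnion (SierpProof.enum_finite S _ _)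
            (fun z _ => SierpProof.pick_finite S _ z)
        · intro U hU
          obtain ⟨z, _, hUz⟩ := mem_iUnion₂.mp hU
          exact SierpProof.pick_subset S _ z hUz
    · intro z
      by_cases hz : ∃ n : ℕ, z ∈ ⋃₀ SierpProof.phase1 S (O n) n
      · obtain ⟨n, hn⟩ := hz
        refine ⟨(n : Ordinal.{0}), lt_of_lt_of_le (Ordinal.nat_lt_omega0 n)
          le_self_add, ?_⟩
        rw [SierpProof.strat, dif_pos (Ordinal.nat_lt_omega0 n), SierpProof.natOf_natCast]
        exact hn
      · push_neg at hz
        have hzres : z ∈ SierpProof.resid S (fun n : ℕ => O n) := hz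
        have hOn : ∀ n : ℕ, IsOpenCover (O n) := fun n =>
          hO n (lt_of_lt_of_le (Ordinal.nat_lt_omega0 n) le_self_add)
        have hcnt := SierpProof.resid_countable S hS (fun n : ℕ => O n) hOn
        have hex : ∃ f : ℕ → ↥S, SierpProof.resid S (fun n : ℕ => O n) ⊆ Set.range f := by
          obtain ⟨f, hf⟩ := hcnt.exists_eq_range ⟨z, hzres⟩
          exact ⟨f, hf.le⟩
        obtain ⟨k, hk⟩ := hex.choose_spec hzres
        have hγlt : Ordinal.omega0 + (k : Ordinal.{0}) < Ordinal.omega0 + Ordinal.omega0 :=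
          (add_lt_add_iff_left _).mpr (Ordinal.nat_lt_omega0 k)
        refine ⟨Ordinal.omega0 + (k : Ordinal.{0}), hγlt, ?_⟩
        have hnotlt : ¬ (Ordinal.omega0 + (k : Ordinal.{0}) < Ordinal.omega0) :=
          not_lt.mpr le_self_add
        rw [SierpProof.strat, dif_neg hnotlt, Ordinal.add_sub_cancel,
          SierpProof.natOf_natCast, SierpProof.enum, dif_pos hex, hk,
          Set.biUnion_singleton]
        have hcov := hO _ hγlt
        have hepick : ∃ U ∈ O (Ordinal.omega0 + (k : Ordinal.{0})), z ∈ U := by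
          have : z ∈ ⋃₀ O (Ordinal.omega0 + (k : Ordinal.{0})) := hcov.2 ▸ mem_univ z
          exact this
        rw [SierpProof.pick, dif_pos hepick]
        exact ⟨hepick.choose, rfl, hepick.choose_spec.2⟩
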